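/- Let Φ be an irreducible root system with extended basis Δ'. Define a partial order on Φ by: α ≤ β if and only if in the affine root system Φ_aff = Φ × ℤ with basis Δ_aff, one has (α, v+ε_α) ≤ (β, v+ε_β) coefficientwise for every integer v, where ε_γ = 0 if γ > 0 and ε_γ = 1 if γ < 0 relative to Δ. Then for α, β ∈ Φ: α ≤ β if and only if there exist elements γ_1, …, γ_t of Δ' such that for every i ∈ {1,…,t}, α_i = α + γ_1 + ⋯ + γ_i is a root of Φ, and α_t = β. -/

import Mathlib

open Finset

/-- A based, irreducible, reduced root system in a Euclidean space, together with
coordinate data with respect to the base `Δ`, the highest root, and the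
extended base `Δ' = Δ ∪ {-highest}`. -/
structure BasedRootSystem (V : Type*) [NormedAddCommGroup V] [InnerProductSpace ℝ V] where
  Φ : Finset V
  zero_not_mem : (0 : V) ∉ Φ
  neg_mem : ∀ α ∈ Φ, -α ∈ Φ
  reduced : ∀ α ∈ Φ, ∀ c : ℝ, c • α ∈ Φ → c = 1 ∨ c = -1
  crystallographic : ∀ α ∈ Φ, ∀ β ∈ Φ, ∃ n : ℤ,
    2 * (inner ℝ α β : ℝ) / (inner ℝ α α : ℝ) = (n : ℝ)
  reflect_mem : ∀ α ∈ Φ, ∀ β ∈ Φ, β - (2 * (inner ℝ β α : ℝ) / (inner ℝ α α : ℝ)) • α ∈ Φ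
  Δ : Finset V
  base_sub : Δ ⊆ Φ
  indep : LinearIndependent ℝ (fun γ : Δ => (γ : V))
  coord : V → V → ℤ
  coord_zero : ∀ γ : V, coord 0 γ = 0
  coord_spec : ∀ α ∈ Φ, α = ∑ γ ∈ Δ, (coord α γ : ℝ) • γ
  coord_sign : ∀ α ∈ Φ, (∀ γ ∈ Δ, 0 ≤ coord α γ) ∨ (∀ γ ∈ Δ, coord α γ ≤ 0)
  highest : V
  highest_mem : highest ∈ Φ
  highest_pos : ∀ γ ∈ Δ, 1 ≤ coord highest γ
  highest_is_highest : ∀ α ∈ Φ, ∀ γ ∈ Δ, coord α γ ≤ coord highest γ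

namespace BasedRootSystem

variable {V : Type*} [NormedAddCommGroup V] [InnerProductSpace ℝ V] (B : BasedRootSystem V)

/-- `α` is positive relative to the base `Δ`. -/
def IsPos (α : V) : Prop := ∀ γ ∈ B.Δ, 0 ≤ B.coord α γ

/-- `ε_α` : `0` if `α` is positive, `1` otherwise. -/
noncomputable def eps (α : V) : ℤ := by
  classical exact if B.IsPos α then 0 else 1

/-- The extended base `Δ' = Δ ∪ {-α_M}`. -/
noncomputable def extBase : Finset V := by
  classical exact insert (-B.highest) B.Δ

/-- The Coxeter number: one plus the height of the highest root. -/
def cox : ℤ := (∑ γ ∈ B.Δ, B.coord B.highest γ) + 1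

/-- Coefficientwise order on affine roots `(α, n)`, via their decomposition in the
affine basis `Δ_aff`. -/
def affLe (p q : V × ℤ) : Prop :=
  p.2 ≤ q.2 ∧ ∀ γ ∈ B.Δ,
    B.coord p.1 γ + p.2 * B.coord B.highest γ ≤ B.coord q.1 γ + q.2 * B.coord B.highest γ

/-- The partial order on `Φ` induced from the affine root system:
`α ≤ β` iff `(α, v + ε_α) ≤ (β, v + ε_β)` coefficientwise for every `v`. -/
def rle (α β : V) : Prop := B.affLe (α, B.eps α) (β, B.eps β)

/-- `c` is a decomposition of `α` as a nonnegative integral combination of the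
extended base `Δ'`. -/
def IsDecomp (α : V) (c : V → ℕ) : Prop :=
  α = ∑ γ ∈ B.extBase, (c γ : ℝ) • γ

/-- The sum of the coefficients of a decomposition in `Δ'`. -/
noncomputable def decompSum (c : V → ℕ) : ℤ := ∑ γ ∈ B.extBase, (c γ : ℤ)

/-- A subset of `Φ` is `Δ'`-complete if it is downward closed for the order `rle`. -/
def Complete (Ψ : Set V) : Prop :=
  ∀ α ∈ Ψ, ∀ β ∈ B.Φ, B.rle β α → β ∈ Ψ

/-- The set of ratios `(Σ ε_{α_i})/t` over nonempty zero-sum families in `X`. -/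
noncomputable def ratioSet (X : Set V) : Set ℝ :=
  {q | ∃ (t : ℕ) (a : Fin t → V), 0 < t ∧ (∀ i, a i ∈ X) ∧ (∑ i, a i) = 0 ∧
        q = (∑ i, (B.eps (a i) : ℝ)) / (t : ℝ)}

end BasedRootSystem

namespace BasedRootSystem

variable {V : Type*} [NormedAddCommGroup V] [InnerProductSpace ℝ V] (B : BasedRootSystem V)

open scoped Classical

lemma mem_ne_zero {α : V} (hα : α ∈ B.Φ) : α ≠ 0 := fun h => B.zero_not_mem (h ▸ hα)

lemma sum_smul_eq_zero {f : V → ℝ} (h : ∑ γ ∈ B.Δ, f γ • γ = 0) :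
    ∀ γ ∈ B.Δ, f γ = 0 := by
  classical
  have hli := Fintype.linearIndependent_iff.mp B.indep (fun γ : B.Δ => f γ)
  have hsum : ∑ γ : B.Δ, f γ • (γ : V) = 0 := by
    rw [Finset.sum_coe_sort B.Δ (fun γ => f γ • γ)]; exact h
  intro γ hγ
  exact hli hsum ⟨γ, hγ⟩

lemma coord_eq_of_repr {α : V} (hα : α ∈ B.Φ) (m : V → ℤ)
    (h : α = ∑ γ ∈ B.Δ, (m γ : ℝ) • γ) : ∀ γ ∈ B.Δ, B.coord α γ = m γ := by
  intro γ hγ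
  have h2 := B.coord_spec α hα
  have h3 : ∑ γ ∈ B.Δ, ((B.coord α γ : ℝ) - (m γ : ℝ)) • γ = 0 := by
    simp only [sub_smul, Finset.sum_sub_distrib, ← h2, ← h, sub_self]
  have h4 := B.sum_smul_eq_zero h3 γ hγ
  have : (B.coord α γ : ℝ) = (m γ : ℝ) := by linarith
  exact_mod_cast this

lemma coord_add {α β : V} (hα : α ∈ B.Φ) (hβ : β ∈ B.Φ) (hs : α + β ∈ B.Φ) :
    ∀ γ ∈ B.Δ, B.coord (α + β) γ = B.coord α γ + B.coord β γ := by
  apply B.coord_eq_of_repr hs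
  conv_lhs => rw [B.coord_spec α hα, B.coord_spec β hβ]
  rw [← Finset.sum_add_distrib]
  apply Finset.sum_congr rfl
  intro γ _
  push_cast
  rw [add_smul]

lemma coord_neg {α : V} (hα : α ∈ B.Φ) :
    ∀ γ ∈ B.Δ, B.coord (-α) γ = -B.coord α γ := by
  apply B.coord_eq_of_repr (B.neg_mem α hα)
  conv_lhs => rw [B.coord_spec α hα]
  rw [← Finset.sum_neg_distrib]
  apply Finset.sum_congr rfl
  intro γ _
  push_cast
  rw [neg_smul]

lemma coord_base {δ : V} (hδ : δ ∈ B.Δ) :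
    ∀ γ ∈ B.Δ, B.coord δ γ = if γ = δ then 1 else 0 := by
  classical
  apply B.coord_eq_of_repr (B.base_sub hδ)
  rw [Finset.sum_congr rfl (fun γ _ => ?_), Finset.sum_ite_eq' B.Δ δ (fun γ => (γ : V))]
  · rw [if_pos hδ]
  · show ((if γ = δ then (1:ℤ) else 0 : ℤ) : ℝ) • γ = if γ = δ then γ else 0
    split <;> simp

lemma coord_inj {α β : V} (hα : α ∈ B.Φ) (hβ : β ∈ B.Φ)
    (h : ∀ γ ∈ B.Δ, B.coord α γ = B.coord β γ) : α = β := by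
  rw [B.coord_spec α hα, B.coord_spec β hβ]
  exact Finset.sum_congr rfl (fun γ hγ => by rw [h γ hγ])

lemma exists_coord_ne {α : V} (hα : α ∈ B.Φ) : ∃ γ ∈ B.Δ, B.coord α γ ≠ 0 := by
  by_contra h
  push_neg at h
  apply B.mem_ne_zero hα
  rw [B.coord_spec α hα]
  apply Finset.sum_eq_zero
  intro γ hγ
  rw [h γ hγ]
  simp

lemma eps_of_pos {α : V} (h : B.IsPos α) : B.eps α = 0 := by
  simp [eps, h]

lemma eps_of_not_pos {α : V} (h : ¬ B.IsPos α) : B.eps α = 1 := by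
  simp [eps, h]

lemma eps_nonneg (α : V) : 0 ≤ B.eps α := by
  by_cases h : B.IsPos α
  · rw [B.eps_of_pos h]
  · rw [B.eps_of_not_pos h]; norm_num

lemma eps_le_one (α : V) : B.eps α ≤ 1 := by
  by_cases h : B.IsPos α
  · rw [B.eps_of_pos h]; norm_num
  · rw [B.eps_of_not_pos h]

lemma isPos_of_eps_eq_zero {α : V} (h : B.eps α = 0) : B.IsPos α := by
  by_contra hn
  rw [B.eps_of_not_pos hn] at h
  exact one_ne_zero h

lemma coord_nonpos {α : V} (hα : α ∈ B.Φ) (h : ¬ B.IsPos α) :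
    ∀ γ ∈ B.Δ, B.coord α γ ≤ 0 := by
  rcases B.coord_sign α hα with h1 | h1
  · exact absurd h1 h
  · exact h1

lemma coord_ge_neg_highest {α : V} (hα : α ∈ B.Φ) :
    ∀ γ ∈ B.Δ, -B.coord B.highest γ ≤ B.coord α γ := by
  intro γ hγ
  have h1 := B.highest_is_highest (-α) (B.neg_mem α hα) γ hγ
  rw [B.coord_neg hα γ hγ] at h1
  omega

lemma isPos_highest : B.IsPos B.highest := fun γ hγ => le_trans zero_le_one (B.highest_pos γ hγ)

lemma neg_highest_not_mem : -B.highest ∉ B.Δ := by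
  intro h
  have h1 := B.coord_base h (-B.highest) h
  rw [if_pos rfl] at h1
  have h2 := B.coord_neg B.highest_mem (-B.highest) h
  have h3 := B.highest_pos (-B.highest) h
  omega

lemma mem_extBase_iff {s : V} : s ∈ B.extBase ↔ s = -B.highest ∨ s ∈ B.Δ := by
  simp [extBase]

lemma neg_highest_mem_extBase : -B.highest ∈ B.extBase := B.mem_extBase_iff.mpr (Or.inl rfl)

lemma base_mem_extBase {δ : V} (h : δ ∈ B.Δ) : δ ∈ B.extBase := B.mem_extBase_iff.mpr (Or.inr h)

lemma extBase_mem_Phi {s : V} (h : s ∈ B.extBase) : s ∈ B.Φ := by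
  rcases B.mem_extBase_iff.mp h with h | h
  · rw [h]; exact B.neg_mem _ B.highest_mem
  · exact B.base_sub h

lemma sum_extBase {M : Type*} [AddCommMonoid M] (f : V → M) :
    ∑ s ∈ B.extBase, f s = f (-B.highest) + ∑ s ∈ B.Δ, f s := by
  classical
  rw [show B.extBase = insert (-B.highest) B.Δ from by simp [extBase]]
  exact Finset.sum_insert B.neg_highest_not_mem

/-- The affine coefficient of a root `ζ` at an element `s` of the extended base. -/
noncomputable def Cf (ζ s : V) : ℤ :=
  if s = -B.highest then B.eps ζ else B.coord ζ s + B.eps ζ * B.coord B.highest s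

lemma Cf_neg_highest (ζ : V) : B.Cf ζ (-B.highest) = B.eps ζ := if_pos rfl

lemma Cf_base {ζ γ : V} (hγ : γ ∈ B.Δ) :
    B.Cf ζ γ = B.coord ζ γ + B.eps ζ * B.coord B.highest γ := by
  rw [Cf, if_neg]
  intro h
  exact B.neg_highest_not_mem (h ▸ hγ)

lemma Cf_nonneg {ζ : V} (hζ : ζ ∈ B.Φ) {s : V} (hs : s ∈ B.extBase) : 0 ≤ B.Cf ζ s := by
  rcases B.mem_extBase_iff.mp hs with h | h
  · rw [h, B.Cf_neg_highest]; exact B.eps_nonneg ζ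
  · rw [B.Cf_base h]
    by_cases hp : B.IsPos ζ
    · rw [B.eps_of_pos hp]
      have := hp s h
      omega
    · rw [B.eps_of_not_pos hp]
      have := B.coord_ge_neg_highest hζ s h
      omega

lemma rle_iff {α β : V} : B.rle α β ↔ ∀ s ∈ B.extBase, B.Cf α s ≤ B.Cf β s := by
  constructor
  · rintro ⟨h1, h2⟩ s hs
    rcases B.mem_extBase_iff.mp hs with h | h
    · rw [h, B.Cf_neg_highest, B.Cf_neg_highest]; exact h1
    · rw [B.Cf_base h, B.Cf_base h]; exact h2 s h
  · intro h
    constructor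
    · have := h (-B.highest) B.neg_highest_mem_extBase
      rwa [B.Cf_neg_highest, B.Cf_neg_highest] at this
    · intro γ hγ
      have := h γ (B.base_mem_extBase hγ)
      rwa [B.Cf_base hγ, B.Cf_base hγ] at this

lemma repr_extBase {ζ : V} (hζ : ζ ∈ B.Φ) :
    ζ = ∑ s ∈ B.extBase, (B.Cf ζ s : ℝ) • s := by
  rw [B.sum_extBase (fun s => (B.Cf ζ s : ℝ) • s), B.Cf_neg_highest,
    Finset.sum_congr rfl (fun γ hγ => by rw [B.Cf_base hγ])]
  have key : ∑ γ ∈ B.Δ, ((B.coord ζ γ + B.eps ζ * B.coord B.highest γ : ℤ) : ℝ) • γ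
      = (∑ γ ∈ B.Δ, (B.coord ζ γ : ℝ) • γ)
        + (B.eps ζ : ℝ) • (∑ γ ∈ B.Δ, (B.coord B.highest γ : ℝ) • γ) := by
    rw [Finset.smul_sum, ← Finset.sum_add_distrib]
    refine Finset.sum_congr rfl (fun γ _ => ?_)
    push_cast
    rw [add_smul, mul_smul]
  rw [key, ← B.coord_spec ζ hζ, ← B.coord_spec B.highest B.highest_mem, smul_neg]
  abel


lemma eps_add_base {ζ δ : V} (hζ : ζ ∈ B.Φ) (hδ : δ ∈ B.Δ) (hs : ζ + δ ∈ B.Φ) :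
    B.eps (ζ + δ) = B.eps ζ := by
  have hca := B.coord_add hζ (B.base_sub hδ) hs
  by_cases hp : B.IsPos ζ
  · rw [B.eps_of_pos hp, B.eps_of_pos ?_]
    intro γ hγ
    rw [hca γ hγ, B.coord_base hδ γ hγ]
    have := hp γ hγ
    split <;> omega
  · rw [B.eps_of_not_pos hp, B.eps_of_not_pos ?_]
    intro hp2
    have hnp := B.coord_nonpos hζ hp
    have hcoord : ∀ γ ∈ B.Δ, B.coord ζ γ = B.coord (-δ) γ := by
      intro γ hγ
      have h1 := hp2 γ hγ
      rw [hca γ hγ, B.coord_base hδ γ hγ] at h1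
      have h2 := hnp γ hγ
      rw [B.coord_neg (B.base_sub hδ) γ hγ, B.coord_base hδ γ hγ]
      by_cases hγδ : γ = δ
      · rw [if_pos hγδ] at h1 ⊢
        -- coord ζ γ ∈ {-1, 0}; need to rule out 0 later; here show = -1
        rcases (by omega : B.coord ζ γ = -1 ∨ B.coord ζ γ = 0) with h | h
        · omega
        · -- if coord ζ δ = 0 then all coords of ζ are ≤ 0 with the δ one 0 and others 0
          exfalso
          obtain ⟨γ0, hγ0, hne0⟩ := B.exists_coord_ne hζ
          by_cases hγ04 : γ0 = δ
          · apply hne0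
            rw [hγ04, ← hγδ]
            exact h
          · have h1' := hp2 γ0 hγ0
            rw [hca γ0 hγ0, B.coord_base hδ γ0 hγ0, if_neg hγ04] at h1'
            have h2' := hnp γ0 hγ0
            omega
      · rw [if_neg hγδ] at h1 ⊢
        omega
    have : ζ = -δ := B.coord_inj hζ (B.neg_mem δ (B.base_sub hδ)) hcoord
    rw [this] at hs
    simp at hs
    exact B.zero_not_mem hs

lemma eps_sub_highest {ζ : V} (hζ : ζ ∈ B.Φ) (hs : ζ - B.highest ∈ B.Φ) :
    B.eps ζ = 0 ∧ B.eps (ζ - B.highest) = 1 := by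
  have hM : -B.highest ∈ B.Φ := B.neg_mem _ B.highest_mem
  have hadd : ζ + -B.highest ∈ B.Φ := by rwa [← sub_eq_add_neg]
  have hca : ∀ γ ∈ B.Δ, B.coord (ζ - B.highest) γ = B.coord ζ γ - B.coord B.highest γ := by
    intro γ hγ
    have := B.coord_add hζ hM hadd γ hγ
    rw [← sub_eq_add_neg] at this
    rw [this, B.coord_neg B.highest_mem γ hγ]
    ring
  constructor
  · rw [B.eps_of_pos ?_]
    by_contra hp
    have hnp := B.coord_nonpos hζ hp
    obtain ⟨γ0, hγ0, hne0⟩ := B.exists_coord_ne hζ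
    have hneg : ζ - B.highest ∈ B.Φ := hs
    have hξ : -(ζ - B.highest) ∈ B.Φ := B.neg_mem _ hs
    have h1 := B.highest_is_highest _ hξ γ0 hγ0
    rw [B.coord_neg hs γ0 hγ0, hca γ0 hγ0] at h1
    have h2 := hnp γ0 hγ0
    omega
  · rw [B.eps_of_not_pos ?_]
    intro hp
    have : ∀ γ ∈ B.Δ, B.coord (ζ - B.highest) γ = 0 := by
      intro γ hγ
      have h1 := hp γ hγ
      have h2 := B.highest_is_highest ζ hζ γ hγ
      have h3 := hca γ hγ
      omega
    obtain ⟨γ0, hγ0, hne0⟩ := B.exists_coord_ne hs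
    exact hne0 (this γ0 hγ0)

lemma Cf_step {ζ s : V} (hζ : ζ ∈ B.Φ) (hs : s ∈ B.extBase) (h2 : ζ + s ∈ B.Φ) :
    ∀ u ∈ B.extBase, B.Cf (ζ + s) u = B.Cf ζ u + (if u = s then 1 else 0) := by
  intro u hu
  rcases B.mem_extBase_iff.mp hs with hsM | hsΔ
  · subst hsM
    have hsub : ζ - B.highest ∈ B.Φ := by rwa [sub_eq_add_neg]
    obtain ⟨he0, he1⟩ := B.eps_sub_highest hζ hsub
    have hca : ∀ γ ∈ B.Δ, B.coord (ζ + -B.highest) γ = B.coord ζ γ - B.coord B.highest γ := by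
      intro γ hγ
      rw [B.coord_add hζ (B.neg_mem _ B.highest_mem) h2 γ hγ,
        B.coord_neg B.highest_mem γ hγ]
      ring
    rw [show ζ + -B.highest = ζ - B.highest from (sub_eq_add_neg ζ B.highest).symm] at hca ⊢
    rcases B.mem_extBase_iff.mp hu with huM | huΔ
    · subst huM
      rw [B.Cf_neg_highest, B.Cf_neg_highest, he0, he1, if_pos rfl]
      norm_num
    · rw [B.Cf_base huΔ, B.Cf_base huΔ, he0, he1, hca u huΔ,
        if_neg (fun h => B.neg_highest_not_mem (by rw [← h]; exact huΔ))]
      ring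
  · have heps := B.eps_add_base hζ hsΔ h2
    have hca : ∀ γ ∈ B.Δ, B.coord (ζ + s) γ = B.coord ζ γ + (if γ = s then 1 else 0) := by
      intro γ hγ
      rw [B.coord_add hζ (B.base_sub hsΔ) h2 γ hγ, B.coord_base hsΔ γ hγ]
    rcases B.mem_extBase_iff.mp hu with huM | huΔ
    · subst huM
      rw [B.Cf_neg_highest, B.Cf_neg_highest, heps,
        if_neg (fun h => B.neg_highest_not_mem (by rw [h]; exact hsΔ))]
      ring
    · rw [B.Cf_base huΔ, B.Cf_base huΔ, heps, hca u huΔ]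
      ring


lemma inner_self_pos {α : V} (hα : α ∈ B.Φ) : (0:ℝ) < inner ℝ α α := by
  rw [real_inner_self_eq_norm_mul_norm]
  have : (0:ℝ) < ‖α‖ := norm_pos_iff.mpr (B.mem_ne_zero hα)
  exact mul_pos this this

lemma add_mem_of_inner_neg {α γ : V} (hα : α ∈ B.Φ) (hγ : γ ∈ B.Φ)
    (hne : α ≠ -γ) (hinner : (inner ℝ α γ : ℝ) < 0) : α + γ ∈ B.Φ := by
  have haa := B.inner_self_pos hα
  have hgg := B.inner_self_pos hγ
  have hα0 : (0:ℝ) < ‖α‖ := norm_pos_iff.mpr (B.mem_ne_zero hα)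
  have hγ0 : (0:ℝ) < ‖γ‖ := norm_pos_iff.mpr (B.mem_ne_zero hγ)
  obtain ⟨n, hn⟩ := B.crystallographic γ hγ α hα
  obtain ⟨m, hm⟩ := B.crystallographic α hα γ hγ
  rw [real_inner_comm α γ] at hn
  have hreflα := B.reflect_mem γ hγ α hα
  have hreflγ := B.reflect_mem α hα γ hγ
  rw [hn] at hreflα
  rw [real_inner_comm α γ, hm] at hreflγ
  have hnneg : n ≤ -1 := by
    have h1 : (n:ℝ) < 0 := by
      rw [← hn]
      exact div_neg_of_neg_of_pos (by linarith) hgg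
    have : n < 0 := by exact_mod_cast h1
    omega
  have hmneg : m ≤ -1 := by
    have h1 : (m:ℝ) < 0 := by
      rw [← hm]
      exact div_neg_of_neg_of_pos (by linarith) haa
    have : m < 0 := by exact_mod_cast h1
    omega
  -- strict Cauchy-Schwarz
  have hcs : -(inner ℝ α γ : ℝ) < ‖α‖ * ‖γ‖ := by
    have h1 : (inner ℝ α (-γ) : ℝ) < ‖α‖ * ‖-γ‖ := by
      rw [inner_lt_norm_mul_iff_real]
      intro hcontra
      rw [norm_neg] at hcontra
      have key : α = (-(‖α‖/‖γ‖)) • γ := by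
        apply smul_right_injective V (ne_of_gt hγ0)
        show ‖γ‖ • α = ‖γ‖ • (-(‖α‖/‖γ‖) • γ)
        rw [hcontra, smul_smul, smul_neg, ← neg_smul]
        congr 1
        field_simp
      rcases B.reduced γ hγ (-(‖α‖/‖γ‖)) (key ▸ hα) with h | h
      · have : (0:ℝ) < ‖α‖/‖γ‖ := by positivity
        linarith
      · apply hne
        rw [key, h]
        simp
    rwa [inner_neg_right, norm_neg] at h1
  have hsq : (inner ℝ α γ : ℝ) * (inner ℝ α γ : ℝ) < (inner ℝ α α : ℝ) * (inner ℝ γ γ : ℝ) := by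
    have hA : (inner ℝ α α : ℝ) = ‖α‖ * ‖α‖ := real_inner_self_eq_norm_mul_norm α
    have hG : (inner ℝ γ γ : ℝ) = ‖γ‖ * ‖γ‖ := real_inner_self_eq_norm_mul_norm γ
    nlinarith [mul_lt_mul'' hcs hcs (by linarith) (by linarith)]
  have h4 : (n:ℝ) * (m:ℝ) < 4 := by
    rw [← hn, ← hm, div_mul_div_comm, div_lt_iff₀ (by positivity)]
    nlinarith [hsq]
  have h4' : n * m < 4 := by exact_mod_cast h4
  have hcase : n = -1 ∨ m = -1 := by
    by_contra hcon
    push_neg at hcon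
    have h5 : n ≤ -2 := by omega
    have h6 : m ≤ -2 := by omega
    nlinarith
  rcases hcase with h | h
  · rw [h] at hreflα
    push_cast at hreflα
    rw [neg_smul, one_smul, sub_neg_eq_add] at hreflα
    exact hreflα
  · rw [h] at hreflγ
    push_cast at hreflγ
    rw [neg_smul, one_smul, sub_neg_eq_add] at hreflγ
    rwa [add_comm] at hreflγ

lemma exists_step {α β : V} (hα : α ∈ B.Φ) (hβ : β ∈ B.Φ)
    (hle : ∀ s ∈ B.extBase, B.Cf α s ≤ B.Cf β s) (hne : α ≠ β) :
    ∃ s ∈ B.extBase,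
      (α + s ∈ B.Φ ∧ ∀ u ∈ B.extBase, B.Cf (α + s) u ≤ B.Cf β u) ∨
      (β - s ∈ B.Φ ∧ ∀ u ∈ B.extBase, B.Cf α u ≤ B.Cf (β - s) u) := by
  classical
  have hd : β - α = ∑ s ∈ B.extBase, ((B.Cf β s - B.Cf α s : ℤ) : ℝ) • s := by
    conv_lhs => rw [B.repr_extBase hβ, B.repr_extBase hα]
    rw [← Finset.sum_sub_distrib]
    refine Finset.sum_congr rfl fun s _ => ?_
    push_cast
    rw [sub_smul]
  have hpos : (0:ℝ) < inner ℝ (β - α) (β - α) := by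
    rw [real_inner_self_eq_norm_mul_norm]
    have h0 : β - α ≠ 0 := sub_ne_zero.mpr (fun h => hne h.symm)
    have : (0:ℝ) < ‖β - α‖ := norm_pos_iff.mpr h0
    exact mul_pos this this
  have hexp : (inner ℝ (β - α) (β - α) : ℝ)
      = ∑ s ∈ B.extBase, ((B.Cf β s - B.Cf α s : ℤ) : ℝ) * (inner ℝ (β - α) s : ℝ) := by
    nth_rewrite 2 [hd]
    rw [inner_sum]
    exact Finset.sum_congr rfl fun s _ => real_inner_smul_right _ _ _
  have hterm : ∃ s ∈ B.extBase,
      0 < ((B.Cf β s - B.Cf α s : ℤ) : ℝ) * (inner ℝ (β - α) s : ℝ) := by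
    by_contra hc
    push_neg at hc
    have h1 := Finset.sum_nonpos hc
    rw [← hexp] at h1
    linarith
  obtain ⟨s, hsE, hst⟩ := hterm
  have hsΦ : s ∈ B.Φ := B.extBase_mem_Phi hsE
  have hd0 : (0:ℝ) ≤ ((B.Cf β s - B.Cf α s : ℤ) : ℝ) := by
    have := hle s hsE
    have h2 : (0:ℤ) ≤ B.Cf β s - B.Cf α s := by omega
    exact_mod_cast h2
  have hds : B.Cf α s < B.Cf β s := by
    by_contra hc
    push_neg at hc
    have h2 : B.Cf β s - B.Cf α s = 0 := by have := hle s hsE; omega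
    have h3 : ((B.Cf β s - B.Cf α s : ℤ) : ℝ) = 0 := by exact_mod_cast h2
    rw [h3, zero_mul] at hst
    exact lt_irrefl _ hst
  have hip : (0:ℝ) < inner ℝ (β - α) s := by
    rcases lt_or_eq_of_le hd0 with h | h
    · nlinarith
    · rw [← h, zero_mul] at hst
      exact absurd hst (lt_irrefl 0)
  have hips : (inner ℝ α s : ℝ) < 0 ∨ (0:ℝ) < inner ℝ β s := by
    rw [inner_sub_left] at hip
    by_contra hc
    push_neg at hc
    linarith [hc.1, hc.2]
  rcases hips with hαs | hβs
  · -- step up from α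
    have hne2 : α ≠ -s := by
      intro hcon
      rcases B.mem_extBase_iff.mp hsE with hM | hΔ
      · subst hM
        rw [neg_neg] at hcon
        subst hcon
        have he0 : B.eps B.highest = 0 := B.eps_of_pos B.isPos_highest
        have h1 := hds
        rw [B.Cf_neg_highest, B.Cf_neg_highest, he0] at h1
        have he1 : B.eps β = 1 := by have := B.eps_le_one β; omega
        have hnpβ : ¬ B.IsPos β := fun hp => by
          rw [B.eps_of_pos hp] at he1; exact one_ne_zero he1.symm
        have hcβ := B.coord_nonpos hβ hnpβ
        obtain ⟨γ0, hγ0, hne0⟩ := B.exists_coord_ne hβ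
        have h2 := hle γ0 (B.base_mem_extBase hγ0)
        rw [B.Cf_base hγ0, B.Cf_base hγ0, he0, he1] at h2
        have := hcβ γ0 hγ0
        omega
      · have hδΦ := B.base_sub hΔ
        have he1 : B.eps α = 1 := by
          apply B.eps_of_not_pos
          intro hp
          have h1 := hp s hΔ
          rw [hcon, B.coord_neg hδΦ s hΔ, B.coord_base hΔ s hΔ, if_pos rfl] at h1
          omega
        have he2 : B.eps β = 1 := by
          have h2 := hle (-B.highest) B.neg_highest_mem_extBase
          rw [B.Cf_neg_highest, B.Cf_neg_highest, he1] at h2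
          have := B.eps_le_one β
          omega
        have hnpβ : ¬ B.IsPos β := fun hp => by
          rw [B.eps_of_pos hp] at he2; exact one_ne_zero he2.symm
        have hcβ := B.coord_nonpos hβ hnpβ
        have h1 := hds
        rw [B.Cf_base hΔ, B.Cf_base hΔ, he1, he2,
          hcon, B.coord_neg hδΦ s hΔ, B.coord_base hΔ s hΔ, if_pos rfl] at h1
        have hcb0 : B.coord β s = 0 := by have := hcβ s hΔ; omega
        obtain ⟨γ0, hγ0, hne0⟩ := B.exists_coord_ne hβ
        by_cases hγs : γ0 = s
        · rw [hγs] at hne0; exact hne0 hcb0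
        · have h3 := hle γ0 (B.base_mem_extBase hγ0)
          rw [B.Cf_base hγ0, B.Cf_base hγ0, he1, he2,
            hcon, B.coord_neg hδΦ γ0 hγ0, B.coord_base hΔ γ0 hγ0, if_neg hγs] at h3
          have := hcβ γ0 hγ0
          omega
    have hmem : α + s ∈ B.Φ := B.add_mem_of_inner_neg hα hsΦ hne2 hαs
    refine ⟨s, hsE, Or.inl ⟨hmem, ?_⟩⟩
    intro u huE
    rw [B.Cf_step hα hsE hmem u huE]
    have := hle u huE
    by_cases hus : u = s
    · rw [if_pos hus, hus]
      omega
    · rw [if_neg hus]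
      omega
  · -- step down from β
    have hne2 : β ≠ s := by
      intro hcon
      rcases B.mem_extBase_iff.mp hsE with hM | hΔ
      · subst hM
        have he1 : B.eps β = 1 := by
          rw [hcon]
          apply B.eps_of_not_pos
          intro hp
          obtain ⟨γ0, hγ0, hne0⟩ := B.exists_coord_ne (B.neg_mem _ B.highest_mem)
          have h1 := hp γ0 hγ0
          rw [B.coord_neg B.highest_mem γ0 hγ0] at h1
          have := B.highest_pos γ0 hγ0
          omega
        have he0 : B.eps α = 0 := by
          have h1 := hds
          rw [B.Cf_neg_highest, B.Cf_neg_highest, he1] at h1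
          have := B.eps_nonneg α
          omega
        have hpα := B.isPos_of_eps_eq_zero he0
        obtain ⟨γ0, hγ0, hne0⟩ := B.exists_coord_ne hα
        have h2 := hle γ0 (B.base_mem_extBase hγ0)
        rw [B.Cf_base hγ0, B.Cf_base hγ0, he0, he1, hcon,
          B.coord_neg B.highest_mem γ0 hγ0] at h2
        have := hpα γ0 hγ0
        omega
      · have hδΦ := B.base_sub hΔ
        have he1 : B.eps β = 0 := by
          rw [hcon]
          apply B.eps_of_pos
          intro γ hγ
          rw [B.coord_base hΔ γ hγ]
          split <;> omega
        have he0 : B.eps α = 0 := by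
          have h2 := hle (-B.highest) B.neg_highest_mem_extBase
          rw [B.Cf_neg_highest, B.Cf_neg_highest, he1] at h2
          have := B.eps_nonneg α
          omega
        have hpα := B.isPos_of_eps_eq_zero he0
        have h1 := hds
        rw [B.Cf_base hΔ, B.Cf_base hΔ, he0, he1,
          hcon, B.coord_base hΔ s hΔ, if_pos rfl] at h1
        have hca0 : B.coord α s = 0 := by have := hpα s hΔ; omega
        obtain ⟨γ0, hγ0, hne0⟩ := B.exists_coord_ne hα
        by_cases hγs : γ0 = s
        · rw [hγs] at hne0; exact hne0 hca0
        · have h3 := hle γ0 (B.base_mem_extBase hγ0)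
          rw [B.Cf_base hγ0, B.Cf_base hγ0, he0, he1,
            hcon, B.coord_base hΔ γ0 hγ0, if_neg hγs] at h3
          have := hpα γ0 hγ0
          omega
    have hnegs : -s ∈ B.Φ := B.neg_mem s hsΦ
    have hmem' : β + -s ∈ B.Φ := by
      apply B.add_mem_of_inner_neg hβ hnegs
      · rw [neg_neg]
        exact hne2
      · rw [inner_neg_right]
        linarith
    have hmem : β - s ∈ B.Φ := by rwa [← sub_eq_add_neg] at hmem'
    refine ⟨s, hsE, Or.inr ⟨hmem, ?_⟩⟩
    intro u huE
    have hba : β - s + s = β := by abel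
    have hstep := B.Cf_step hmem hsE (by rwa [hba]) u huE
    rw [hba] at hstep
    have := hle u huE
    by_cases hus : u = s
    · rw [if_pos hus] at hstep
      subst hus
      omega
    · rw [if_neg hus] at hstep
      omega

lemma chain_exists : ∀ n : ℕ, ∀ α β : V, α ∈ B.Φ → β ∈ B.Φ →
    (∀ s ∈ B.extBase, B.Cf α s ≤ B.Cf β s) →
    (∑ s ∈ B.extBase, (B.Cf β s - B.Cf α s)) = (n : ℤ) →
    ∃ (t : ℕ) (g : ℕ → V),
      (∀ i < t, g i ∈ B.extBase) ∧
      (∀ i ≤ t, α + ∑ j ∈ Finset.range i, g j ∈ B.Φ) ∧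
      α + ∑ j ∈ Finset.range t, g j = β := by
  classical
  intro n
  induction n using Nat.strong_induction_on with
  | _ n IH =>
    intro α β hα hβ hle hsum
    by_cases hne : α = β
    · subst hne
      refine ⟨0, fun _ => 0, by omega, ?_, by simp⟩
      intro i hi
      have : i = 0 := by omega
      subst this
      simpa using hα
    · obtain ⟨s, hsE, hcase⟩ := B.exists_step hα hβ hle hne
      have hite : ∑ u ∈ B.extBase, (if u = s then (1:ℤ) else 0) = 1 := by
        rw [Finset.sum_ite_eq' B.extBase s (fun _ => (1:ℤ)), if_pos hsE]
      rcases hcase with ⟨hmem, hle'⟩ | ⟨hmem, hle'⟩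
      · -- up step
        have hstep := B.Cf_step hα hsE hmem
        have hsum' : ∑ u ∈ B.extBase, (B.Cf β u - B.Cf (α + s) u) = (n:ℤ) - 1 := by
          have h1 : ∑ u ∈ B.extBase, (B.Cf β u - B.Cf (α + s) u)
              = ∑ u ∈ B.extBase,
                  ((B.Cf β u - B.Cf α u) - (if u = s then 1 else 0)) := by
            refine Finset.sum_congr rfl fun u hu => ?_
            rw [hstep u hu]
            ring
          rw [h1, Finset.sum_sub_distrib, hsum, hite]
        have hnn : (0:ℤ) ≤ ∑ u ∈ B.extBase, (B.Cf β u - B.Cf (α + s) u) :=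
          Finset.sum_nonneg fun u hu => by have := hle' u hu; omega
        have hn1 : 1 ≤ n := by omega
        obtain ⟨t, g, hg1, hg2, hg3⟩ := IH (n-1) (by omega) (α + s) β hmem hβ hle'
          (by rw [hsum']; push_cast [Nat.cast_sub hn1]; ring)
        refine ⟨t+1, fun i => if i = 0 then s else g (i-1), ?_, ?_, ?_⟩
        · intro i hi
          beta_reduce
          by_cases h0 : i = 0
          · rw [if_pos h0]; exact hsE
          · rw [if_neg h0]; exact hg1 (i-1) (by omega)
        · intro i hi
          beta_reduce
          cases i with
          | zero => simpa using hα
          | succ k =>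
            have hsum2 : ∑ j ∈ Finset.range (k+1),
                (if j = 0 then s else g (j-1)) = s + ∑ j ∈ Finset.range k, g j := by
              rw [Finset.sum_range_succ']
              simp [Nat.succ_ne_zero, add_comm]
            rw [hsum2, show α + (s + ∑ j ∈ Finset.range k, g j)
              = (α + s) + ∑ j ∈ Finset.range k, g j by abel]
            exact hg2 k (by omega)
        · beta_reduce
          have hsum2 : ∑ j ∈ Finset.range (t+1),
              (if j = 0 then s else g (j-1)) = s + ∑ j ∈ Finset.range t, g j := by
            rw [Finset.sum_range_succ']
            simp [Nat.succ_ne_zero, add_comm]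
          rw [hsum2, show α + (s + ∑ j ∈ Finset.range t, g j)
            = (α + s) + ∑ j ∈ Finset.range t, g j by abel]
          exact hg3
      · -- down step
        have hba : β - s + s = β := by abel
        have hstep := B.Cf_step hmem hsE (by rwa [hba])
        rw [hba] at hstep
        have hsum' : ∑ u ∈ B.extBase, (B.Cf (β - s) u - B.Cf α u) = (n:ℤ) - 1 := by
          have h1 : ∑ u ∈ B.extBase, (B.Cf (β - s) u - B.Cf α u)
              = ∑ u ∈ B.extBase,
                  ((B.Cf β u - B.Cf α u) - (if u = s then 1 else 0)) := by
            refine Finset.sum_congr rfl fun u hu => ?_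
            rw [hstep u hu]
            ring
          rw [h1, Finset.sum_sub_distrib, hsum, hite]
        have hnn : (0:ℤ) ≤ ∑ u ∈ B.extBase, (B.Cf (β - s) u - B.Cf α u) :=
          Finset.sum_nonneg fun u hu => by have := hle' u hu; omega
        have hn1 : 1 ≤ n := by omega
        obtain ⟨t, g, hg1, hg2, hg3⟩ := IH (n-1) (by omega) α (β - s) hα hmem hle'
          (by rw [hsum']; push_cast [Nat.cast_sub hn1]; ring)
        refine ⟨t+1, fun i => if i = t then s else g i, ?_, ?_, ?_⟩
        · intro i hi
          beta_reduce
          by_cases h0 : i = t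
          · rw [if_pos h0]; exact hsE
          · rw [if_neg h0]; exact hg1 i (by omega)
        · intro i hi
          beta_reduce
          by_cases hit : i ≤ t
          · have hsum2 : ∑ j ∈ Finset.range i, (if j = t then s else g j)
                = ∑ j ∈ Finset.range i, g j :=
              Finset.sum_congr rfl fun j hj => by
                rw [if_neg]
                have := Finset.mem_range.mp hj
                omega
            rw [hsum2]
            exact hg2 i hit
          · have hit1 : i = t + 1 := by omega
            subst hit1
            have hsum2 : ∑ j ∈ Finset.range (t+1), (if j = t then s else g j)
                = (∑ j ∈ Finset.range t, g j) + s := by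
              rw [Finset.sum_range_succ, if_pos rfl]
              congr 1
              exact Finset.sum_congr rfl fun j hj => by
                rw [if_neg]
                have := Finset.mem_range.mp hj
                omega
            rw [hsum2, show α + ((∑ j ∈ Finset.range t, g j) + s)
              = (α + ∑ j ∈ Finset.range t, g j) + s by abel, hg3, hba]
            exact hβ
        · beta_reduce
          have hsum2 : ∑ j ∈ Finset.range (t+1), (if j = t then s else g j)
              = (∑ j ∈ Finset.range t, g j) + s := by
            rw [Finset.sum_range_succ, if_pos rfl]
            congr 1
            exact Finset.sum_congr rfl fun j hj => by
              rw [if_neg]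
              have := Finset.mem_range.mp hj
              omega
          rw [hsum2, show α + ((∑ j ∈ Finset.range t, g j) + s)
            = (α + ∑ j ∈ Finset.range t, g j) + s by abel, hg3, hba]

lemma rle_of_chain {α : V} (hα : α ∈ B.Φ) :
    ∀ (t : ℕ) (g : ℕ → V),
    (∀ i < t, g i ∈ B.extBase) →
    (∀ i ≤ t, α + ∑ j ∈ Finset.range i, g j ∈ B.Φ) →
    ∀ s ∈ B.extBase, B.Cf α s ≤ B.Cf (α + ∑ j ∈ Finset.range t, g j) s := by
  intro t
  induction t with
  | zero =>
    intro g _ _ s hs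
    simp
  | succ k IH =>
    intro g hg1 hg2 s hs
    have hζ := hg2 k (by omega)
    have hζ' := hg2 (k+1) (le_refl _)
    rw [Finset.sum_range_succ, ← add_assoc] at hζ'
    have hstep := B.Cf_step hζ (hg1 k (by omega)) hζ' s hs
    have hIH := IH g (fun i hi => hg1 i (by omega)) (fun i hi => hg2 i (by omega)) s hs
    rw [Finset.sum_range_succ, ← add_assoc, hstep]
    split <;> linarith

end BasedRootSystem


/-- `α ≤ β` in the partial order induced from the affine root system
iff one can pass from `α` to `β` by successively adding elements of `Δ'`, staying
inside `Φ` at each step. -/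
theorem stmt3 {V : Type*} [NormedAddCommGroup V] [InnerProductSpace ℝ V]
    (B : BasedRootSystem V) (α β : V) (hα : α ∈ B.Φ) (hβ : β ∈ B.Φ) :
    B.rle α β ↔ ∃ (t : ℕ) (g : ℕ → V),
      (∀ i < t, g i ∈ B.extBase) ∧
      (∀ i ≤ t, α + ∑ j ∈ Finset.range i, g j ∈ B.Φ) ∧
      α + ∑ j ∈ Finset.range t, g j = β := by
  constructor
  · intro hle
    have hle' := (B.rle_iff).mp hle
    have hnn : (0:ℤ) ≤ ∑ s ∈ B.extBase, (B.Cf β s - B.Cf α s) :=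
      Finset.sum_nonneg fun s hs => by have := hle' s hs; omega
    exact B.chain_exists (∑ s ∈ B.extBase, (B.Cf β s - B.Cf α s)).toNat α β hα hβ hle'
      (Int.toNat_of_nonneg hnn).symm
  · rintro ⟨t, g, hg1, hg2, hg3⟩
    rw [B.rle_iff]
    intro s hs
    have h := B.rle_of_chain hα t g hg1 hg2 s hs
    rwa [hg3] at h
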